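/- Let γ > 0 and ε > 0, and set M_ε := {M ∈ Ŵ ∩ S : λ_1(M) ≥ √(1/2 + ε)}. Then: (i) F_γ(X) ∈ M_ε for all X ∈ M_ε; (ii) F_γ is Lipschitz continuous on M_ε with respect to ‖·‖_F with Lipschitz constant 1 + γ/ε, i.e. ‖F_γ(X) − F_γ(Y)‖_F ≤ (1 + γ/ε)·‖X − Y‖_F for all X, Y ∈ M_ε. -/

import Mathlib

open Matrix

noncomputable def vnorm {d : ℕ} (v : Fin d → ℝ) : ℝ := Real.sqrt (∑ i, v i ^ 2)

noncomputable def frobInner {d : ℕ} (M N : Matrix (Fin d) (Fin d) ℝ) : ℝ :=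
  ∑ i, ∑ j, M i j * N i j

noncomputable def frobNorm {d : ℕ} (M : Matrix (Fin d) (Fin d) ℝ) : ℝ :=
  Real.sqrt (frobInner M M)

def IsOrthProjOn {d : ℕ} (V : Submodule ℝ (Matrix (Fin d) (Fin d) ℝ))
    (P : Matrix (Fin d) (Fin d) ℝ →ₗ[ℝ] Matrix (Fin d) (Fin d) ℝ) : Prop :=
  (∀ X, P X ∈ V) ∧ (∀ X ∈ V, P X = X) ∧ ∀ X Y, frobInner (P X) Y = frobInner X (P Y)

noncomputable def hsNorm {d : ℕ}
    (T : Matrix (Fin d) (Fin d) ℝ →ₗ[ℝ] Matrix (Fin d) (Fin d) ℝ) : ℝ :=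
  Real.sqrt (∑ i, ∑ j,
    frobInner (T (Matrix.single i j 1)) (T (Matrix.single i j 1)))

noncomputable def specNorm {d : ℕ} (M : Matrix (Fin d) (Fin d) ℝ) : ℝ :=
  sSup {r : ℝ | ∃ v : Fin d → ℝ, (∑ i, v i ^ 2) = 1 ∧ r = |dotProduct v (M.mulVec v)|}

noncomputable def lamTop {d : ℕ} (M : Matrix (Fin d) (Fin d) ℝ) : ℝ :=
  sSup {r : ℝ | ∃ v : Fin d → ℝ, (∑ i, v i ^ 2) = 1 ∧ r = dotProduct v (M.mulVec v)}

def IsLocMaxSpec {d : ℕ} (V : Submodule ℝ (Matrix (Fin d) (Fin d) ℝ))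
    (M : Matrix (Fin d) (Fin d) ℝ) : Prop :=
  M ∈ V ∧ frobNorm M ≤ 1 ∧
    ∃ ε > 0, ∀ X ∈ V, frobNorm X ≤ 1 → frobNorm (X - M) < ε → specNorm X ≤ specNorm M

namespace FGaux
variable {d : ℕ}

def toE (M : Matrix (Fin d) (Fin d) ℝ) : EuclideanSpace ℝ (Fin d × Fin d) :=
  WithLp.toLp 2 (fun p => M p.1 p.2)

lemma toE_add (A B : Matrix (Fin d) (Fin d) ℝ) : toE (A + B) = toE A + toE B := by rfl
lemma toE_sub (A B : Matrix (Fin d) (Fin d) ℝ) : toE (A - B) = toE A - toE B := by rfl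
lemma toE_smul (c : ℝ) (A : Matrix (Fin d) (Fin d) ℝ) : toE (c • A) = c • toE A := by rfl

lemma frobInner_eq (M N : Matrix (Fin d) (Fin d) ℝ) :
    frobInner M N = inner ℝ (toE M) (toE N) := by
  simp [frobInner, toE, PiLp.inner_apply, RCLike.inner_apply, Fintype.sum_prod_type]
  exact Finset.sum_congr rfl fun i _ => Finset.sum_congr rfl fun j _ => mul_comm _ _

lemma frobNorm_eq (M : Matrix (Fin d) (Fin d) ℝ) : frobNorm M = ‖toE M‖ := by
  rw [frobNorm, frobInner_eq, real_inner_self_eq_norm_sq, Real.sqrt_sq (norm_nonneg _)]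

lemma frobNorm_nonneg (M : Matrix (Fin d) (Fin d) ℝ) : 0 ≤ frobNorm M := by
  rw [frobNorm_eq]; exact norm_nonneg _

lemma frobNorm_sq (M : Matrix (Fin d) (Fin d) ℝ) : frobNorm M ^ 2 = frobInner M M := by
  rw [frobNorm_eq, frobInner_eq, real_inner_self_eq_norm_sq]

lemma fi_comm (M N : Matrix (Fin d) (Fin d) ℝ) : frobInner M N = frobInner N M := by
  rw [frobInner_eq, frobInner_eq, real_inner_comm]

lemma fi_add_left (A B C : Matrix (Fin d) (Fin d) ℝ) :
    frobInner (A + B) C = frobInner A C + frobInner B C := by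
  simp [frobInner_eq, toE_add, inner_add_left]

lemma fi_sub_left (A B C : Matrix (Fin d) (Fin d) ℝ) :
    frobInner (A - B) C = frobInner A C - frobInner B C := by
  simp [frobInner_eq, toE_sub, inner_sub_left]

lemma fi_smul_left (c : ℝ) (A C : Matrix (Fin d) (Fin d) ℝ) :
    frobInner (c • A) C = c * frobInner A C := by
  simp [frobInner_eq, toE_smul, real_inner_smul_left, Finset.mul_sum, mul_assoc]

lemma fi_smul_right (c : ℝ) (A C : Matrix (Fin d) (Fin d) ℝ) :
    frobInner A (c • C) = c * frobInner A C := by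
  rw [fi_comm, fi_smul_left, fi_comm]

lemma fi_add_right (A B C : Matrix (Fin d) (Fin d) ℝ) :
    frobInner C (A + B) = frobInner C A + frobInner C B := by
  rw [fi_comm, fi_add_left, fi_comm A C, fi_comm B C]

lemma fi_sub_right (A B C : Matrix (Fin d) (Fin d) ℝ) :
    frobInner C (A - B) = frobInner C A - frobInner C B := by
  rw [fi_comm, fi_sub_left, fi_comm A C, fi_comm B C]

lemma fi_cs (M N : Matrix (Fin d) (Fin d) ℝ) :
    frobInner M N ≤ frobNorm M * frobNorm N := by
  rw [frobInner_eq, frobNorm_eq, frobNorm_eq]; exact real_inner_le_norm _ _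

lemma fi_abs_cs (M N : Matrix (Fin d) (Fin d) ℝ) :
    |frobInner M N| ≤ frobNorm M * frobNorm N := by
  rw [frobInner_eq, frobNorm_eq, frobNorm_eq]; exact abs_real_inner_le_norm _ _

lemma frobNorm_smul (c : ℝ) (M : Matrix (Fin d) (Fin d) ℝ) :
    frobNorm (c • M) = |c| * frobNorm M := by
  rw [frobNorm_eq, frobNorm_eq, toE_smul, norm_smul, Real.norm_eq_abs]

lemma frobNorm_add_le (A B : Matrix (Fin d) (Fin d) ℝ) :
    frobNorm (A + B) ≤ frobNorm A + frobNorm B := by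
  rw [frobNorm_eq, frobNorm_eq, frobNorm_eq, toE_add]; exact norm_add_le _ _

lemma le_of_sq_le_sq {x y : ℝ} (hy : 0 ≤ y) (h : x ^ 2 ≤ y ^ 2) (_hx : 0 ≤ x) : x ≤ y := by
  nlinarith

/-- radial projection onto the unit sphere is 1-Lipschitz outside the unit ball -/
lemma radial {E : Type*} [NormedAddCommGroup E] [InnerProductSpace ℝ E]
    (a b : E) (ha : 1 ≤ ‖a‖) (hb : 1 ≤ ‖b‖) :
    ‖(‖a‖⁻¹ • a) - (‖b‖⁻¹ • b)‖ ≤ ‖a - b‖ := by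
  set α := ‖a‖
  set β := ‖b‖
  have hα : (0:ℝ) < α := lt_of_lt_of_le one_pos ha
  have hβ : (0:ℝ) < β := lt_of_lt_of_le one_pos hb
  have hc : inner ℝ a b ≤ α * β := real_inner_le_norm a b
  apply le_of_sq_le_sq (norm_nonneg _) _ (norm_nonneg _)
  rw [norm_sub_sq_real, norm_sub_sq_real]
  have h1 : ‖α⁻¹ • a‖ = 1 := by
    rw [norm_smul, Real.norm_eq_abs, abs_inv, abs_of_pos hα]
    exact inv_mul_cancel₀ hα.ne'
  have h2 : ‖β⁻¹ • b‖ = 1 := by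
    rw [norm_smul, Real.norm_eq_abs, abs_inv, abs_of_pos hβ]
    exact inv_mul_cancel₀ hβ.ne'
  rw [h1, h2, real_inner_smul_left, real_inner_smul_right]
  set c : ℝ := inner ℝ a b with hcdef
  have hab : 1 ≤ α * β := by nlinarith
  have hinv : α⁻¹ * (β⁻¹ * c) = c / (α * β) := by field_simp
  rw [hinv]
  have hp : (0:ℝ) < α * β := by positivity
  have he : c / (α * β) ≤ 1 := (div_le_one hp).mpr hc
  have hc' : c / (α * β) * (α * β) = c := div_mul_cancel₀ c (ne_of_gt hp)
  show 1 ^ 2 - 2 * (c / (α * β)) + 1 ^ 2 ≤ α ^ 2 - 2 * c + β ^ 2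
  nlinarith [sq_nonneg (α - β), mul_nonneg (sub_nonneg.mpr he) (sub_nonneg.mpr hab)]

lemma fi_vmv (M : Matrix (Fin d) (Fin d) ℝ) (a b : Fin d → ℝ) :
    frobInner M (vecMulVec a b) = dotProduct a (M.mulVec b) := by
  simp only [frobInner, vecMulVec_apply, dotProduct, mulVec, Finset.mul_sum]
  exact Finset.sum_congr rfl fun i _ => Finset.sum_congr rfl fun j _ => by ring

lemma fi_vmv_vmv (a b : Fin d → ℝ) :
    frobInner (vecMulVec a a) (vecMulVec b b) = (dotProduct a b) ^ 2 := by
  simp only [frobInner, vecMulVec_apply, dotProduct]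
  rw [sq, Finset.sum_mul_sum]
  exact Finset.sum_congr rfl fun i _ => Finset.sum_congr rfl fun j _ => by ring

lemma dp_self (a : Fin d → ℝ) : dotProduct a a = ∑ i, a i ^ 2 := by
  simp [dotProduct, sq]

lemma frobNorm_vmv_self (a : Fin d → ℝ) :
    frobNorm (vecMulVec a a) = ∑ i, a i ^ 2 := by
  rw [frobNorm, fi_vmv_vmv, Real.sqrt_sq_eq_abs, dp_self, abs_of_nonneg]
  positivity

lemma symm_dot {X : Matrix (Fin d) (Fin d) ℝ} (hs : X.IsSymm) (a b : Fin d → ℝ) :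
    dotProduct a (X.mulVec b) = dotProduct b (X.mulVec a) := by
  conv_lhs => rw [Matrix.dotProduct_mulVec, ← hs, Matrix.vecMul_transpose,
    dotProduct_comm]

lemma lamTop_bdd (M : Matrix (Fin d) (Fin d) ℝ) :
    BddAbove {r : ℝ | ∃ v : Fin d → ℝ, (∑ i, v i ^ 2) = 1 ∧ r = dotProduct v (M.mulVec v)} := by
  refine ⟨frobNorm M, ?_⟩
  rintro r ⟨v, hv, rfl⟩
  have h1 : dotProduct v (M.mulVec v) = frobInner M (vecMulVec v v) := (fi_vmv M v v).symm
  have h2 := fi_abs_cs M (vecMulVec v v)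
  rw [frobNorm_vmv_self, hv, mul_one] at h2
  rw [h1]
  exact le_trans (le_abs_self _) h2

lemma lamTop_ge (M : Matrix (Fin d) (Fin d) ℝ) (v : Fin d → ℝ) (hv : ∑ i, v i ^ 2 = 1) :
    dotProduct v (M.mulVec v) ≤ lamTop M :=
  le_csSup (lamTop_bdd M) ⟨v, hv, rfl⟩

/-- the key quadratic-form bound: for a unit vector `v`, `vᵀXv ≤ s c² + √(1-s²)(1-c²)`. -/
lemma quad_bound (X : Matrix (Fin d) (Fin d) ℝ) (hsymm : X.IsSymm) (hXS : frobNorm X = 1)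
    (u : Fin d → ℝ) (hu : ∑ i, u i ^ 2 = 1) (s : ℝ) (hs0 : 0 ≤ s)
    (heig : X.mulVec u = s • u) (v : Fin d → ℝ) (hv : ∑ i, v i ^ 2 = 1) :
    dotProduct v (X.mulVec v) ≤
      s * (dotProduct u v) ^ 2 + Real.sqrt (1 - s ^ 2) * (1 - (dotProduct u v) ^ 2) := by
  set c := dotProduct u v with hc
  have huu : dotProduct u u = 1 := by rw [dp_self, hu]
  have hvv : dotProduct v v = 1 := by rw [dp_self, hv]
  set w : Fin d → ℝ := v - c • u with hw
  have huw : dotProduct u w = 0 := by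
    simp [hw, dotProduct_sub, dotProduct_smul, huu, smul_eq_mul]
    exact sub_eq_zero.mpr hc.symm
  have hwu : dotProduct w u = 0 := by rw [dotProduct_comm]; exact huw
  have hww : dotProduct w w = 1 - c ^ 2 := by
    simp only [hw, dotProduct_sub, sub_dotProduct, smul_dotProduct, dotProduct_smul,
      smul_eq_mul, huu, hvv, dotProduct_comm v u, ← hc]
    ring
  -- fiXU : frobInner X (vecMulVec u u) = s
  have fiXU : frobInner X (vecMulVec u u) = s := by
    rw [fi_vmv, heig, dotProduct_smul, smul_eq_mul, huu, mul_one]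
  have fiUU : frobInner (vecMulVec u u) (vecMulVec u u) = 1 := by
    rw [fi_vmv_vmv, huu, one_pow]
  -- X' := X - s • u uᵀ has frobenius norm √(1-s²)
  set X' : Matrix (Fin d) (Fin d) ℝ := X - s • vecMulVec u u with hX'
  have hX'self : frobInner X' X' = 1 - s ^ 2 := by
    have h11 : frobInner X X = 1 := by
      have := frobNorm_sq X; rw [hXS] at this; linarith [this]
    rw [hX', fi_sub_left, fi_sub_right, fi_sub_right]
    simp only [fi_smul_left, fi_smul_right]
    rw [h11, fiXU, fi_comm (vecMulVec u u) X, fiXU, fiUU]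
    ring
  have hX'norm : frobNorm X' = Real.sqrt (1 - s ^ 2) := by
    rw [frobNorm, hX'self]
  -- wᵀXw ≤ √(1-s²) * (1-c²)
  have hwXw : dotProduct w (X.mulVec w) ≤ Real.sqrt (1 - s ^ 2) * (1 - c ^ 2) := by
    have e1 : dotProduct w (X.mulVec w) = frobInner X' (vecMulVec w w) := by
      rw [hX', fi_sub_left, fi_smul_left, fi_vmv, fi_vmv_vmv, huw]
      simp
    have e2 := fi_cs X' (vecMulVec w w)
    rw [hX'norm, frobNorm_vmv_self, ← dp_self, hww] at e2
    rw [e1]; exact e2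
  -- decompose vᵀXv
  have hveq : v = c • u + w := by rw [hw]; abel
  have hXw_u : dotProduct u (X.mulVec w) = 0 := by
    rw [symm_dot hsymm, heig, dotProduct_smul, smul_eq_mul, hwu, mul_zero]
  have expand : dotProduct v (X.mulVec v) = c ^ 2 * s + dotProduct w (X.mulVec w) := by
    conv_lhs => rw [hveq]
    rw [Matrix.mulVec_add, Matrix.mulVec_smul, heig]
    simp only [add_dotProduct, dotProduct_add, smul_dotProduct, dotProduct_smul,
      smul_eq_mul, huu, huw, hwu, hXw_u]
    ring_nf
  rw [expand]
  nlinarith [hwXw]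

lemma gap_bound (ε s : ℝ) (hε : 0 < ε) (hεh : ε ≤ 1 / 2)
    (hs : Real.sqrt (1 / 2 + ε) ≤ s) (hs1 : s ≤ 1) :
    ε ≤ s - Real.sqrt (1 - s ^ 2) := by
  set A := Real.sqrt (1 / 2 + ε) with hA
  set B := Real.sqrt (1 / 2 - ε) with hB
  have hA2 : A ^ 2 = 1 / 2 + ε := Real.sq_sqrt (by linarith)
  have hB2 : B ^ 2 = 1 / 2 - ε := Real.sq_sqrt (by linarith)
  have hA0 : 0 ≤ A := Real.sqrt_nonneg _
  have hB0 : 0 ≤ B := Real.sqrt_nonneg _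
  have hA1 : A ≤ 1 := by nlinarith
  have hB1 : B ≤ 1 := by nlinarith
  have hsub : Real.sqrt (1 - s ^ 2) ≤ B := by
    rw [hB]
    apply Real.sqrt_le_sqrt
    nlinarith
  have hsum : 0 < A + B := by nlinarith
  have hprod : (A - B) * (A + B) = 2 * ε := by linear_combination hA2 - hB2
  have h2' : ε * (A + B) ≤ (A - B) * (A + B) := by rw [hprod]; nlinarith
  have hAB : ε ≤ A - B := le_of_mul_le_mul_right h2' hsum
  linarith

lemma arith_eps_half (ε t0 : ℝ) (h2 : t0 ^ 2 = 1 / 2 + ε) (h0 : 0 ≤ t0) (h1 : t0 ≤ 1) :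
    ε ≤ 1 / 2 := by nlinarith

lemma arith_sq_le (s q : ℝ) (hq : 0 ≤ q) (hs : 0 ≤ s) (h : s ≤ Real.sqrt q) : s ^ 2 ≤ q := by
  nlinarith [Real.sq_sqrt hq, Real.sqrt_nonneg q]

lemma arith_one_le (N a : ℝ) (hN : 0 ≤ N) (ha : 0 ≤ a) (h2 : N ^ 2 = 1 + a) : 1 ≤ N := by
  nlinarith

lemma arith_key (ε s q γ : ℝ) (hγ : 0 < γ) (hs0 : 0 ≤ s) (hq0 : 0 ≤ q)
    (h1 : 1 / 2 + ε ≤ s ^ 2) (h2 : s ^ 2 ≤ q) :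
    (1 / 2 + ε) * (1 + 2 * γ * s + γ ^ 2 * q) ≤ (s + γ * q) ^ 2 := by
  have h3 : 1 / 2 + ε ≤ q := le_trans h1 h2
  nlinarith [mul_nonneg (mul_nonneg hγ.le hs0) (sub_nonneg.mpr h3),
    mul_nonneg (mul_nonneg (sq_nonneg γ) hq0) (sub_nonneg.mpr h3)]

lemma arith_dk (ε c s t ps pt q1 q2 : ℝ)
    (hq1 : q1 ≤ s * c ^ 2 + ps * (1 - c ^ 2)) (hq2 : q2 ≤ t * c ^ 2 + pt * (1 - c ^ 2))
    (hgx : ε ≤ s - ps) (hgy : ε ≤ t - pt) (hc : c ^ 2 ≤ 1) :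
    ε * (2 - 2 * c ^ 2) ≤ s + t - q1 - q2 := by
  have h1c : (0:ℝ) ≤ 1 - c ^ 2 := by linarith
  nlinarith [mul_le_mul_of_nonneg_right hgx h1c, mul_le_mul_of_nonneg_right hgy h1c]

end FGaux

open FGaux
set_option maxHeartbeats 1000000

/-- `F_γ` maps `M_ε` into itself and is Lipschitz continuous there with
constant `1 + γ/ε`. -/
theorem Fgamma_invariance_and_lipschitz
    (d : ℕ) (γ ε : ℝ) (hγ : 0 < γ) (hε : 0 < ε)
    (Wh : Submodule ℝ (Matrix (Fin d) (Fin d) ℝ))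
    (hWhsym : ∀ X ∈ Wh, X.IsSymm)
    (PWh : Matrix (Fin d) (Fin d) ℝ →ₗ[ℝ] Matrix (Fin d) (Fin d) ℝ)
    (hPWh : IsOrthProjOn Wh PWh)
    (X Y : Matrix (Fin d) (Fin d) ℝ)
    (hX : X ∈ Wh) (hXS : frobNorm X = 1) (hXlam : Real.sqrt (1 / 2 + ε) ≤ lamTop X)
    (hY : Y ∈ Wh) (hYS : frobNorm Y = 1) (hYlam : Real.sqrt (1 / 2 + ε) ≤ lamTop Y)
    (ux uy : Fin d → ℝ)
    (hux : ∑ i, ux i ^ 2 = 1) (heigx : X.mulVec ux = lamTop X • ux)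
    (huy : ∑ i, uy i ^ 2 = 1) (heigy : Y.mulVec uy = lamTop Y • uy)
    (FX FY : Matrix (Fin d) (Fin d) ℝ)
    (hFX : FX = (frobNorm (PWh (X + γ • vecMulVec ux ux)))⁻¹ •
      PWh (X + γ • vecMulVec ux ux))
    (hFY : FY = (frobNorm (PWh (Y + γ • vecMulVec uy uy)))⁻¹ •
      PWh (Y + γ • vecMulVec uy uy)) :
    (FX ∈ Wh ∧ frobNorm FX = 1 ∧ Real.sqrt (1 / 2 + ε) ≤ lamTop FX) ∧
      frobNorm (FX - FY) ≤ (1 + γ / ε) * frobNorm (X - Y) := by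
  obtain ⟨hP1, hP2, hP3⟩ := hPWh
  set t0 := Real.sqrt (1 / 2 + ε) with ht0
  have ht00 : 0 ≤ t0 := Real.sqrt_nonneg _
  have ht02 : t0 ^ 2 = 1 / 2 + ε := Real.sq_sqrt (by linarith)
  set s := lamTop X with hs
  set t := lamTop Y with ht
  have hXsym := hWhsym X hX
  have hYsym := hWhsym Y hY
  have huxux : dotProduct ux ux = 1 := by rw [dp_self, hux]
  have huyuy : dotProduct uy uy = 1 := by rw [dp_self, huy]
  have hs0 : 0 ≤ s := le_trans ht00 hXlam
  have ht0' : 0 ≤ t := le_trans ht00 hYlam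
  set U := vecMulVec ux ux with hU
  set V := vecMulVec uy uy with hV
  have fiXX : frobInner X X = 1 := by
    have h := frobNorm_sq X; rw [hXS, one_pow] at h; exact h.symm
  have fiYY : frobInner Y Y = 1 := by
    have h := frobNorm_sq Y; rw [hYS, one_pow] at h; exact h.symm
  have fiXU : frobInner X U = s := by
    rw [hU, fi_vmv, heigx, dotProduct_smul, smul_eq_mul, huxux, mul_one]
  have fiYV : frobInner Y V = t := by
    rw [hV, fi_vmv, heigy, dotProduct_smul, smul_eq_mul, huyuy, mul_one]
  have hUnorm : frobNorm U = 1 := by rw [hU, frobNorm_vmv_self, hux]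
  have hVnorm : frobNorm V = 1 := by rw [hV, frobNorm_vmv_self, huy]
  have hs1 : s ≤ 1 := by
    have h := fi_cs X U; rw [hXS, hUnorm, one_mul, fiXU] at h; exact h
  have ht1 : t ≤ 1 := by
    have h := fi_cs Y V; rw [hYS, hVnorm, one_mul, fiYV] at h; exact h
  have ht01 : t0 ≤ 1 := le_trans hXlam hs1
  have hεh : ε ≤ 1 / 2 := arith_eps_half ε t0 ht02 ht00 ht01
  -- projections of the rank-one matrices
  set QX := PWh U with hQX
  set QY := PWh V with hQY
  have hGX : PWh (X + γ • U) = X + γ • QX := by rw [map_add, _root_.map_smul, hP2 X hX, hQX]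
  have hGY : PWh (Y + γ • V) = Y + γ • QY := by rw [map_add, _root_.map_smul, hP2 Y hY, hQY]
  set GX := X + γ • QX with hGXdef
  set GY := Y + γ • QY with hGYdef
  rw [hGX] at hFX
  rw [hGY] at hFY
  have fiXQX : frobInner X QX = s := by
    rw [hQX, ← hP3 X U, hP2 X hX, fiXU]
  have fiYQY : frobInner Y QY = t := by
    rw [hQY, ← hP3 Y V, hP2 Y hY, fiYV]
  set qX := frobInner QX QX with hqXdef
  set qY := frobInner QY QY with hqYdef
  have hqX0 : 0 ≤ qX := by rw [hqXdef, ← frobNorm_sq]; positivity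
  have hqY0 : 0 ≤ qY := by rw [hqYdef, ← frobNorm_sq]; positivity
  have hQXnorm : frobNorm QX = Real.sqrt qX := rfl
  have hQYnorm : frobNorm QY = Real.sqrt qY := rfl
  have hsqX : s ^ 2 ≤ qX := by
    have h := fi_cs X QX
    rw [hXS, one_mul, fiXQX, hQXnorm] at h
    exact arith_sq_le s qX hqX0 hs0 h
  have hsqY : t ^ 2 ≤ qY := by
    have h := fi_cs Y QY
    rw [hYS, one_mul, fiYQY, hQYnorm] at h
    exact arith_sq_le t qY hqY0 ht0' h
  have hNX2 : frobNorm GX ^ 2 = 1 + 2 * γ * s + γ ^ 2 * qX := by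
    rw [frobNorm_sq, hGXdef, fi_add_left, fi_add_right, fi_add_right]
    simp only [fi_smul_left, fi_smul_right]
    rw [fiXX, fiXQX, fi_comm QX X, fiXQX, ← hqXdef]
    ring
  have hNY2 : frobNorm GY ^ 2 = 1 + 2 * γ * t + γ ^ 2 * qY := by
    rw [frobNorm_sq, hGYdef, fi_add_left, fi_add_right, fi_add_right]
    simp only [fi_smul_left, fi_smul_right]
    rw [fiYY, fiYQY, fi_comm QY Y, fiYQY, ← hqYdef]
    ring
  have hNX1 : 1 ≤ frobNorm GX := by
    refine arith_one_le _ (2 * γ * s + γ ^ 2 * qX) (frobNorm_nonneg GX) ?_ (by rw [hNX2]; ring)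
    have a1 : 0 ≤ 2 * γ * s := mul_nonneg (by linarith) hs0
    have a2 : 0 ≤ γ ^ 2 * qX := mul_nonneg (sq_nonneg γ) hqX0
    linarith
  have hNY1 : 1 ≤ frobNorm GY := by
    refine arith_one_le _ (2 * γ * t + γ ^ 2 * qY) (frobNorm_nonneg GY) ?_ (by rw [hNY2]; ring)
    have a1 : 0 ≤ 2 * γ * t := mul_nonneg (by linarith) ht0'
    have a2 : 0 ≤ γ ^ 2 * qY := mul_nonneg (sq_nonneg γ) hqY0
    linarith
  have hNXpos : 0 < frobNorm GX := lt_of_lt_of_le one_pos hNX1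
  -- part (i)
  have inv1 : FX ∈ Wh := by
    rw [hFX]; exact Wh.smul_mem _ (by rw [← hGX]; exact hP1 _)
  have inv2 : frobNorm FX = 1 := by
    rw [hFX, frobNorm_smul, abs_inv, abs_of_pos hNXpos, inv_mul_cancel₀ (ne_of_gt hNXpos)]
  have fiQXU : frobInner QX U = qX := by
    rw [hqXdef, hQX, hP3 U (PWh U), hP2 _ (hP1 U)]
    exact hP3 U U
  have fiGXU : frobInner GX U = s + γ * qX := by
    rw [hGXdef, fi_add_left, fi_smul_left, fiXU, fiQXU]
  have inv3 : t0 ≤ lamTop FX := by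
    refine le_trans ?_ (lamTop_ge FX ux hux)
    have e : dotProduct ux (FX.mulVec ux) = (frobNorm GX)⁻¹ * (s + γ * qX) := by
      rw [← fi_vmv, ← hU, hFX, fi_smul_left, fiGXU]
    rw [e, inv_mul_eq_div, le_div_iff₀ hNXpos]
    have hsg0 : 0 ≤ s + γ * qX := by positivity
    apply le_of_sq_le_sq hsg0 _ (by positivity)
    rw [mul_pow, ht02, hNX2]
    have h1 : 1 / 2 + ε ≤ s ^ 2 := by
      rw [← ht02]
      exact pow_le_pow_left₀ ht00 hXlam 2
    exact arith_key ε s qX γ hγ hs0 hqX0 h1 hsqX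
  -- part (ii): Lipschitz
  set c := dotProduct ux uy with hcd
  set D := U - V with hD
  have fiUV : frobInner U V = c ^ 2 := by rw [hU, hV, fi_vmv_vmv, hcd]
  have fiUU1 : frobInner U U = 1 := by rw [hU, fi_vmv_vmv, huxux, one_pow]
  have fiVV1 : frobInner V V = 1 := by rw [hV, fi_vmv_vmv, huyuy, one_pow]
  have hc2 : c ^ 2 ≤ 1 := by
    have h := fi_cs U V; rw [hUnorm, hVnorm, one_mul, fiUV] at h; exact h
  have hDsq : frobNorm D ^ 2 = 2 - 2 * c ^ 2 := by
    rw [frobNorm_sq, hD, fi_sub_left, fi_sub_right, fi_sub_right, fiUU1, fiVV1, fiUV,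
      fi_comm V U, fiUV]
    ring
  have quadX := quad_bound X hXsym hXS ux hux s hs0 heigx uy huy
  have quadY := quad_bound Y hYsym hYS uy huy t ht0' heigy ux hux
  have gapX := gap_bound ε s hε hεh hXlam hs1
  have gapY := gap_bound ε t hε hεh hYlam ht1
  have hinner : ε * frobNorm D ^ 2 ≤ frobInner (X - Y) D := by
    have e : frobInner (X - Y) D =
        s + t - dotProduct uy (X.mulVec uy) - dotProduct ux (Y.mulVec ux) := by
      rw [hD, fi_sub_left, fi_sub_right, fi_sub_right, fiXU, fiYV, hU, hV,
        fi_vmv X uy uy, fi_vmv Y ux ux]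
      ring
    rw [e, hDsq]
    have hcc : dotProduct uy ux = c := by rw [dotProduct_comm, hcd]
    rw [← hcd] at quadX
    rw [hcc] at quadY
    have h1c : (0:ℝ) ≤ 1 - c ^ 2 := by linarith
    exact arith_dk ε c s t (Real.sqrt (1 - s ^ 2)) (Real.sqrt (1 - t ^ 2)) _ _
      quadX quadY gapX gapY hc2
  have hDle : ε * frobNorm D ≤ frobNorm (X - Y) := by
    rcases eq_or_lt_of_le (frobNorm_nonneg D) with h0 | hpos
    · rw [← h0, mul_zero]; exact frobNorm_nonneg (X - Y)
    · have h := le_trans hinner (fi_cs (X - Y) D)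
      have h2 : (ε * frobNorm D) * frobNorm D ≤ frobNorm (X - Y) * frobNorm D := by
        rw [mul_assoc, ← sq]; exact h
      exact le_of_mul_le_mul_right h2 hpos
  have hPD : frobNorm (PWh D) ≤ frobNorm D := by
    have h1 : frobInner (PWh D) (PWh D) = frobInner D (PWh D) := by
      rw [hP3 D (PWh D), hP2 _ (hP1 D)]
    have h2 := fi_cs D (PWh D)
    rcases eq_or_lt_of_le (frobNorm_nonneg (PWh D)) with h0 | hpos
    · rw [← h0]; exact frobNorm_nonneg D
    · have h3 : frobNorm (PWh D) * frobNorm (PWh D) ≤ frobNorm D * frobNorm (PWh D) := by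
        have h4 : frobNorm (PWh D) ^ 2 = frobInner D (PWh D) := by rw [frobNorm_sq, h1]
        rw [← sq, h4]; exact h2
      exact le_of_mul_le_mul_right h3 hpos
  have hGdiff : GX - GY = (X - Y) + γ • PWh D := by
    rw [hGXdef, hGYdef, hD, map_sub, hQX, hQY]
    module
  have hDdiv : frobNorm D ≤ frobNorm (X - Y) / ε := by
    rw [le_div_iff₀ hε, mul_comm]; exact hDle
  have hnormG : frobNorm (GX - GY) ≤ (1 + γ / ε) * frobNorm (X - Y) := by
    have step1 : frobNorm (GX - GY) ≤ frobNorm (X - Y) + frobNorm (γ • PWh D) := by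
      rw [hGdiff]; exact frobNorm_add_le _ _
    have step2 : frobNorm (γ • PWh D) = γ * frobNorm (PWh D) := by
      rw [frobNorm_smul, abs_of_pos hγ]
    have step3 : γ * frobNorm (PWh D) ≤ γ * (frobNorm (X - Y) / ε) := by
      apply mul_le_mul_of_nonneg_left (le_trans hPD hDdiv) hγ.le
    have e : (1 + γ / ε) * frobNorm (X - Y) =
        frobNorm (X - Y) + γ * (frobNorm (X - Y) / ε) := by field_simp
    rw [e]
    calc frobNorm (GX - GY) ≤ frobNorm (X - Y) + frobNorm (γ • PWh D) := step1
      _ = frobNorm (X - Y) + γ * frobNorm (PWh D) := by rw [step2]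
      _ ≤ frobNorm (X - Y) + γ * (frobNorm (X - Y) / ε) := add_le_add_right step3 _
  have hfinal : frobNorm (FX - FY) ≤ frobNorm (GX - GY) := by
    have eX : toE FX = ‖toE GX‖⁻¹ • toE GX := by
      rw [hFX, toE_smul, frobNorm_eq]
    have eY : toE FY = ‖toE GY‖⁻¹ • toE GY := by
      rw [hFY, toE_smul, frobNorm_eq]
    rw [frobNorm_eq (FX - FY), toE_sub, eX, eY, frobNorm_eq (GX - GY), toE_sub]
    exact radial _ _ (by rw [← frobNorm_eq]; exact hNX1) (by rw [← frobNorm_eq]; exact hNY1)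
  exact ⟨⟨inv1, inv2, inv3⟩, le_trans hfinal hnormG⟩
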